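/- With the analytic norms ‖f‖_β = sup_{ξ,η} |f̃(ξ,η)| e^{β(|ξ|+|η|)} and the free transport flow (S(t)f)(x;ξ) = f(x − tξ; ξ), if 0 < β < β' and |t| ≤ (β'−β)/β', then ‖S(t)f‖_β ≤ ‖f‖_{β'} for any integrable f on ℝ^{jd} × ℝ^{jd} with ‖f‖_{β'} < ∞. -/

import Mathlib

open MeasureTheory Complex ENNReal

/-- The symplectic Fourier transform `f̃(ξ,η) = ∫ e^{i(x·ξ − v·η)} f(x,v) dx dv`. -/
noncomputable def symplFT {n : ℕ} (f : EuclideanSpace ℝ (Fin n) × EuclideanSpace ℝ (Fin n) → ℂ)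
    (ξ η : EuclideanSpace ℝ (Fin n)) : ℂ :=
  ∫ p : EuclideanSpace ℝ (Fin n) × EuclideanSpace ℝ (Fin n),
    Complex.exp (Complex.I * (((inner ℝ p.1 ξ : ℝ) : ℂ) - ((inner ℝ p.2 η : ℝ) : ℂ))) * f p

/-- The analytic norm `‖f‖_β = sup_{ξ,η} |f̃(ξ,η)| e^{β(|ξ|+|η|)}`, valued in `ℝ≥0∞`. -/
noncomputable def analyticNorm {n : ℕ} (β : ℝ)
    (f : EuclideanSpace ℝ (Fin n) × EuclideanSpace ℝ (Fin n) → ℂ) : ℝ≥0∞ :=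
  ⨆ ξ, ⨆ η,
    ENNReal.ofReal (‖symplFT f ξ η‖ * Real.exp (β * (‖ξ‖ + ‖η‖)))

/-- The free transport flow `(S(t)f)(x;v) = f(x − t v; v)`. -/
noncomputable def freeTransport {n : ℕ} (t : ℝ)
    (f : EuclideanSpace ℝ (Fin n) × EuclideanSpace ℝ (Fin n) → ℂ) :
    EuclideanSpace ℝ (Fin n) × EuclideanSpace ℝ (Fin n) → ℂ :=
  fun p => f (p.1 - t • p.2, p.2)


local notation "E" n => EuclideanSpace ℝ (Fin n)

/-- The shear `(x,v) ↦ (x - t v, v)` as a homeomorphism. -/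
noncomputable def shearHomeo {n : ℕ} (t : ℝ) : ((E n) × (E n)) ≃ₜ ((E n) × (E n)) where
  toFun p := (p.1 - t • p.2, p.2)
  invFun p := (p.1 + t • p.2, p.2)
  left_inv p := by simp
  right_inv p := by simp
  continuous_toFun := by fun_prop
  continuous_invFun := by fun_prop

lemma shear_mp {n : ℕ} (t : ℝ) :
    MeasurePreserving (fun p : (E n) × (E n) => (p.1 - t • p.2, p.2)) volume volume := by
  have h1 : MeasurePreserving (fun q : (E n) × (E n) => (q.1, q.2 - t • q.1))
      (volume.prod volume) (volume.prod volume) := by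
    refine MeasurePreserving.skew_product (g := fun x y => y - t • x)
      (MeasurePreserving.id _) (by fun_prop) ?_
    filter_upwards with x
    simp only [sub_eq_add_neg]
    exact map_add_right_eq_self volume _
  have hswap : MeasurePreserving (Prod.swap : (E n) × (E n) → (E n) × (E n))
      (volume.prod volume) (volume.prod volume) := Measure.measurePreserving_swap
  have := (hswap.comp h1).comp hswap
  have heq : ((Prod.swap ∘ fun q : (E n) × (E n) => (q.1, q.2 - t • q.1)) ∘ Prod.swap)
      = fun p : (E n) × (E n) => (p.1 - t • p.2, p.2) := by
    funext p; rfl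
  rw [heq] at this
  simpa [← Measure.volume_eq_prod] using this

lemma symplFT_freeTransport {n : ℕ} (t : ℝ)
    (f : (E n) × (E n) → ℂ) (ξ η : E n) :
    symplFT (freeTransport t f) ξ η = symplFT f ξ (η - t • ξ) := by
  unfold symplFT freeTransport
  have key := (shear_mp (n := n) t).integral_comp (shearHomeo (n := n) t).measurableEmbedding
    (fun q => Complex.exp (Complex.I * (((inner ℝ q.1 ξ : ℝ) : ℂ) - ((inner ℝ q.2 (η - t • ξ) : ℝ) : ℂ))) * f q)
  rw [← key]
  congr 1
  funext p
  show Complex.exp (Complex.I * (((inner ℝ p.1 ξ : ℝ) : ℂ) - ((inner ℝ p.2 η : ℝ) : ℂ)))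
        * f (p.1 - t • p.2, p.2)
      = Complex.exp (Complex.I * (((inner ℝ (p.1 - t • p.2) ξ : ℝ) : ℂ) -
        ((inner ℝ p.2 (η - t • ξ) : ℝ) : ℂ))) * f (p.1 - t • p.2, p.2)
  have h : ((inner ℝ (p.1 - t • p.2) ξ : ℝ) : ℂ) - ((inner ℝ p.2 (η - t • ξ) : ℝ) : ℂ)
      = ((inner ℝ p.1 ξ : ℝ) : ℂ) - ((inner ℝ p.2 η : ℝ) : ℂ) := by
    rw [inner_sub_left, inner_sub_right, real_inner_smul_left, real_inner_smul_right]
    push_cast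
    ring
  rw [h]

lemma key_exp_ineq {n : ℕ} (β β' t : ℝ) (hβ : 0 < β) (hββ' : β < β')
    (ht : |t| ≤ (β' - β) / β') (ξ η : E n) :
    β * (‖ξ‖ + ‖η‖) ≤ β' * (‖ξ‖ + ‖η - t • ξ‖) := by
  have hβ' : (0:ℝ) < β' := hβ.trans hββ'
  have hb : ‖η‖ ≤ ‖η - t • ξ‖ + |t| * ‖ξ‖ := by
    calc ‖η‖ = ‖(η - t • ξ) + t • ξ‖ := by congr 1; abel
    _ ≤ ‖η - t • ξ‖ + ‖t • ξ‖ := norm_add_le _ _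
    _ = ‖η - t • ξ‖ + |t| * ‖ξ‖ := by rw [norm_smul, Real.norm_eq_abs]
  have hts : |t| * β' ≤ β' - β := (le_div_iff₀ hβ').mp ht
  nlinarith [sq_nonneg (β' - β), norm_nonneg ξ, norm_nonneg (η - t • ξ), abs_nonneg t,
    mul_nonneg (abs_nonneg t) (norm_nonneg ξ)]

theorem analyticNorm_freeTransport_le {n : ℕ} (β β' t : ℝ)
    (hβ : 0 < β) (hββ' : β < β') (ht : |t| ≤ (β' - β) / β')
    (f : EuclideanSpace ℝ (Fin n) × EuclideanSpace ℝ (Fin n) → ℂ)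
    (hf : Integrable f) (hfin : analyticNorm β' f < ⊤) :
    analyticNorm β (freeTransport t f) ≤ analyticNorm β' f := by
  unfold analyticNorm
  refine iSup_le fun ξ => iSup_le fun η => ?_
  rw [symplFT_freeTransport]
  refine le_trans (ENNReal.ofReal_le_ofReal ?_)
    (le_iSup_of_le ξ (le_iSup_of_le (η - t • ξ) le_rfl))
  exact mul_le_mul_of_nonneg_left (Real.exp_le_exp.mpr (key_exp_ineq β β' t hβ hββ' ht ξ η))
    (norm_nonneg _)
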